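/- arXiv:1201.4375 — 2 statements merged into one kernel-verified Lean document; each statement's English description precedes it below -/
import Mathlib

section
/- For every integer k ≥ 3, SP(2k+2, k) ≤ 2k+3; that is, every Sperner k-partition system on a (2k+2)-element set has at most 2k+3 partitions. -/
open Finset

/-- `P` is a partition of the finite set `X` into exactly `k` nonempty classes. -/
def IsPartitionInto {α : Type*} [DecidableEq α] (X : Finset α) (k : ℕ)
    (P : Finset (Finset α)) : Prop :=
  P.card = k ∧ (∀ A ∈ P, A.Nonempty) ∧ (∀ A ∈ P, A ⊆ X) ∧
    ∀ x ∈ X, ∃! A, A ∈ P ∧ x ∈ A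

/-- `Sys` is a Sperner `k`-partition system on the finite set `X`: every member is a
`k`-partition of `X` and no class of one partition is contained in a class of a
different partition of the system. -/
def IsSpernerPartitionSystem {α : Type*} [DecidableEq α] (X : Finset α) (k : ℕ)
    (Sys : Finset (Finset (Finset α))) : Prop :=
  (∀ P ∈ Sys, IsPartitionInto X k P) ∧
    ∀ P ∈ Sys, ∀ Q ∈ Sys, P ≠ Q → ∀ A ∈ P, ∀ B ∈ Q, ¬ A ⊆ B

/-- `SP n k` is the maximum number of partitions in a Sperner `k`-partition system
on an `n`-element set. -/
noncomputable def SP (n k : ℕ) : ℕ :=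
  sSup {m | ∃ Sys : Finset (Finset (Finset (Fin n))),
    IsSpernerPartitionSystem Finset.univ k Sys ∧ Sys.card = m}

lemma crude_count {α : Type*} [DecidableEq α] (S : Finset α) (𝒜 : Finset (Finset α))
    (hsub : ∀ A ∈ 𝒜, A ⊆ S) (hcard : ∀ A ∈ 𝒜, A.card = 2 ∨ A.card = 3) :
    𝒜.card ≤ S.card.choose 2 + S.card.choose 3 := by
  have h : 𝒜 ⊆ S.powersetCard 2 ∪ S.powersetCard 3 := by
    intro A hA
    rcases hcard A hA with h2 | h3
    · exact mem_union_left _ (mem_powersetCard.mpr ⟨hsub A hA, h2⟩)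
    · exact mem_union_right _ (mem_powersetCard.mpr ⟨hsub A hA, h3⟩)
  calc 𝒜.card ≤ (S.powersetCard 2 ∪ S.powersetCard 3).card := card_le_card h
    _ ≤ (S.powersetCard 2).card + (S.powersetCard 3).card := card_union_le _ _
    _ = S.card.choose 2 + S.card.choose 3 := by rw [card_powersetCard, card_powersetCard]

lemma antichain_small {α : Type*} [DecidableEq α] (S : Finset α) (hS : S.card ≤ 4)
    (𝒜 : Finset (Finset α))
    (hsub : ∀ A ∈ 𝒜, A ⊆ S) (hcard : ∀ A ∈ 𝒜, A.card = 2 ∨ A.card = 3)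
    (hanti : ∀ A ∈ 𝒜, ∀ B ∈ 𝒜, A ⊆ B → A = B) :
    𝒜.card ≤ S.card + 2 := by
  have hcrude := crude_count S 𝒜 hsub hcard
  rcases Nat.lt_or_ge S.card 4 with h4 | h4
  · have hb : S.card.choose 2 + S.card.choose 3 ≤ S.card + 2 := by
      interval_cases h : S.card <;> decide
    omega
  · have hS4 : S.card = 4 := le_antisymm hS h4
    have hsplit := Finset.card_filter_add_card_filter_not
      (s := 𝒜) (p := fun A => A.card = 2)
    set A2 := 𝒜.filter (fun A => A.card = 2) with hA2def
    set A3 := 𝒜.filter (fun A => ¬ A.card = 2) with hA3def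
    have hA3c : ∀ A ∈ A3, A.card = 3 := by
      intro A hA
      have h := mem_filter.mp hA
      rcases hcard A h.1 with h2 | h3
      · exact absurd h2 h.2
      · exact h3
    have hA3sub : A3 ⊆ S.powersetCard 3 := by
      intro A hA
      exact mem_powersetCard.mpr ⟨hsub A (mem_filter.mp hA).1, hA3c A hA⟩
    have hc43 : Nat.choose 4 3 = 4 := by decide
    have hc42 : Nat.choose 4 2 = 6 := by decide
    have hc31 : Nat.choose 3 1 = 3 := by decide
    have hA3card : A3.card ≤ 4 := by
      have := card_le_card hA3sub
      rwa [card_powersetCard, hS4, hc43] at this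
    by_cases h3e : A3 = ∅
    · have hsub2 : A2 ⊆ S.powersetCard 2 := by
        intro A hA
        have h := mem_filter.mp hA
        exact mem_powersetCard.mpr ⟨hsub A h.1, h.2⟩
      have h2 := card_le_card hsub2
      rw [card_powersetCard, hS4, hc42] at h2
      rw [h3e] at hsplit
      simp at hsplit
      omega
    · obtain ⟨T, hT⟩ := nonempty_iff_ne_empty.mpr h3e
      have hT𝒜 : T ∈ 𝒜 := (mem_filter.mp hT).1
      have hTc : T.card = 3 := hA3c T hT
      have hTS : T ⊆ S := hsub T hT𝒜
      have hdc : (S \ T).card = 1 := by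
        rw [card_sdiff_of_subset hTS, hS4, hTc]
      obtain ⟨u, hu⟩ := card_eq_one.mp hdc
      have huST : u ∈ S \ T := by rw [hu]; exact mem_singleton_self u
      have huS : u ∈ S := (mem_sdiff.mp huST).1
      have hA2u : ∀ A ∈ A2, u ∈ A := by
        intro A hA
        have hAm := mem_filter.mp hA
        by_contra huA
        have hAT : A ⊆ T := by
          intro a ha
          have haS : a ∈ S := hsub A hAm.1 ha
          by_contra haT
          have : a ∈ S \ T := mem_sdiff.mpr ⟨haS, haT⟩
          rw [hu, mem_singleton] at this
          exact huA (this ▸ ha)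
        have := hanti A hAm.1 T hT𝒜 hAT
        rw [this] at hAm
        omega
      have hA2card : A2.card ≤ 3 := by
        have hinj : Set.InjOn (fun A : Finset α => A.erase u) ↑A2 := by
          intro A hA B hB hAB
          have hAu := hA2u A (mem_coe.mp hA)
          have hBu := hA2u B (mem_coe.mp hB)
          have h : insert u (A.erase u) = insert u (B.erase u) := by
            simp only at hAB; rw [hAB]
          rwa [insert_erase hAu, insert_erase hBu] at h
        have himg : A2.image (fun A => A.erase u) ⊆ (S.erase u).powersetCard 1 := by
          intro E hE
          obtain ⟨A, hA, rfl⟩ := mem_image.mp hE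
          have hAm := mem_filter.mp hA
          refine mem_powersetCard.mpr ⟨?_, ?_⟩
          · intro a ha
            exact mem_erase.mpr ⟨(mem_erase.mp ha).1, hsub A hAm.1 (mem_of_mem_erase ha)⟩
          · rw [card_erase_of_mem (hA2u A hA), hAm.2]
        have h1 := card_le_card himg
        rw [card_powersetCard, card_erase_of_mem huS, hS4] at h1
        rw [← card_image_of_injOn hinj]
        simpa [hc31] using h1
      rcases Nat.lt_or_ge A3.card 4 with h34 | h34
      · omega
      · have hA3all : A3 = S.powersetCard 3 := by
          apply eq_of_subset_of_card_le hA3sub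
          rw [card_powersetCard, hS4, hc43]
          exact h34
        have hA2e : A2 = ∅ := by
          rw [eq_empty_iff_forall_notMem]
          intro A hA
          have hAm := mem_filter.mp hA
          have hASc : (S \ A).Nonempty := by
            rw [← card_pos, card_sdiff_of_subset (hsub A hAm.1), hS4, hAm.2]; omega
          obtain ⟨w, hw⟩ := hASc
          have hwS := (mem_sdiff.mp hw).1
          have hwA := (mem_sdiff.mp hw).2
          have hT' : S.erase w ∈ A3 := by
            rw [hA3all]
            exact mem_powersetCard.mpr ⟨erase_subset _ _, by rw [card_erase_of_mem hwS, hS4]⟩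
          have hT'𝒜 : S.erase w ∈ 𝒜 := (mem_filter.mp hT').1
          have hAT' : A ⊆ S.erase w := fun a ha =>
            mem_erase.mpr ⟨fun h => hwA (h ▸ ha), hsub A hAm.1 ha⟩
          have heq := hanti A hAm.1 _ hT'𝒜 hAT'
          have hc := hA3c _ hT'
          rw [← heq] at hc
          omega
        rw [hA2e] at hsplit
        simp at hsplit
        omega

lemma sys_card_le (k : ℕ) (hk : 3 ≤ k)
    (Sys : Finset (Finset (Finset (Fin (2*k+2)))))
    (hS : IsSpernerPartitionSystem Finset.univ k Sys) :
    Sys.card ≤ 2*k+3 := by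
  classical
  by_contra hcon
  push_neg at hcon
  have hm : 2*k+4 ≤ Sys.card := hcon
  obtain ⟨hpart, hsper⟩ := hS
  set m := Sys.card with hmdef
  have hcardP : ∀ P ∈ Sys, P.card = k := fun P hP => (hpart P hP).1
  have hne : ∀ P ∈ Sys, ∀ C ∈ P, C.Nonempty := fun P hP => (hpart P hP).2.1
  have hcover : ∀ P ∈ Sys, ∀ x : Fin (2*k+2), ∃! C, C ∈ P ∧ x ∈ C :=
    fun P hP x => (hpart P hP).2.2.2 x (mem_univ x)
  have huniq : ∀ P ∈ Sys, ∀ C ∈ P, ∀ C' ∈ P, ∀ x : Fin (2*k+2),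
      x ∈ C → x ∈ C' → C = C' := by
    intro P hP C hC C' hC' x hx hx'
    obtain ⟨D, -, hDu⟩ := hcover P hP x
    rw [hDu C ⟨hC, hx⟩, hDu C' ⟨hC', hx'⟩]
  have hdistinct : ∀ P ∈ Sys, ∀ Q ∈ Sys, P ≠ Q → ∀ C ∈ P, C ∉ Q := by
    intro P hP Q hQ hPQ C hC hCQ
    exact hsper P hP Q hQ hPQ C hC C hCQ (subset_refl C)
  have hge2 : ∀ P ∈ Sys, ∀ C ∈ P, 2 ≤ C.card := by
    intro P hP C hC
    obtain ⟨x, hx⟩ := hne P hP C hC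
    obtain ⟨Q, hQ, hQP⟩ : ∃ Q ∈ Sys, Q ≠ P := by
      apply exists_mem_ne; omega
    obtain ⟨D, ⟨hDQ, hxD⟩, -⟩ := hcover Q hQ x
    have hnsub : ¬ C ⊆ D := hsper P hP Q hQ (Ne.symm hQP) C hC D hDQ
    obtain ⟨y, hyC, hyD⟩ := not_subset.mp hnsub
    have hxy : y ≠ x := fun h => hyD (h ▸ hxD)
    exact one_lt_card.mpr ⟨x, hx, y, hyC, Ne.symm hxy⟩
  -- key cross fact: a pair class is never inside a big class
  have hcross : ∀ P ∈ Sys, ∀ C ∈ P, ∀ Q ∈ Sys, ∀ C' ∈ Q,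
      C.card = 2 → ¬ C'.card = 2 → C ⊆ C' → False := by
    intro P hP C hC Q hQ C' hC' h2 h2' hsub
    by_cases hPQ : P = Q
    · subst hPQ
      obtain ⟨x, hx⟩ : C.Nonempty := by rw [← card_pos]; omega
      have := huniq P hP C hC C' hC' x hx (hsub hx)
      rw [this] at h2
      exact h2' h2
    · exact hsper P hP Q hQ hPQ C hC C' hC' hsub
  have hsum : ∀ P ∈ Sys, ∑ C ∈ P, C.card = 2*k+2 := by
    intro P hP
    have hdisj : ∀ C ∈ P, ∀ C' ∈ P, C ≠ C' → Disjoint C C' := by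
      intro C hC C' hC' hne'
      rw [disjoint_left]
      intro x hx hx'
      exact hne' (huniq P hP C hC C' hC' x hx hx')
    have hU : P.biUnion (fun C => C) = univ := by
      apply eq_univ_of_forall
      intro x
      obtain ⟨C, ⟨hC, hx⟩, -⟩ := hcover P hP x
      exact mem_biUnion.mpr ⟨C, hC, hx⟩
    have h := card_biUnion hdisj
    rw [hU, card_univ, Fintype.card_fin] at h
    simpa using h.symm
  have hle4 : ∀ P ∈ Sys, ∀ C ∈ P, C.card ≤ 4 := by
    intro P hP C hC
    have h1 : ∑ C' ∈ P.erase C, C'.card + C.card = 2*k+2 := by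
      rw [sum_erase_add P _ hC]; exact hsum P hP
    have h2 : (P.erase C).card • 2 ≤ ∑ C' ∈ P.erase C, C'.card :=
      card_nsmul_le_sum _ _ _ (fun C' hC' => hge2 P hP C' (mem_of_mem_erase hC'))
    rw [card_erase_of_mem hC, hcardP P hP, smul_eq_mul] at h2
    omega
  have hsmallbig : ∀ P ∈ Sys,
      k - 2 ≤ (P.filter (fun C => C.card = 2)).card := by
    intro P hP
    have hsplit := card_filter_add_card_filter_not
      (s := P) (p := fun C => C.card = 2)
    have hsum2 := sum_filter_add_sum_filter_not P (fun C => C.card = 2) (fun C => C.card)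
    have h2 : ∑ C ∈ P.filter (fun C => C.card = 2), C.card
        = 2 * (P.filter (fun C => C.card = 2)).card := by
      rw [sum_congr rfl (fun C hC => (mem_filter.mp hC).2), sum_const, smul_eq_mul,
        mul_comm]
    have h3 : (P.filter (fun C => ¬ C.card = 2)).card • 3
        ≤ ∑ C ∈ P.filter (fun C => ¬ C.card = 2), C.card := by
      apply card_nsmul_le_sum
      intro C hC
      have ha := hge2 P hP C (mem_filter.mp hC).1
      have hb := (mem_filter.mp hC).2
      omega
    rw [smul_eq_mul] at h3
    rw [hsum P hP] at hsum2
    rw [hcardP P hP] at hsplit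
    omega
  -- the set of all pair classes
  set PP := Sys.biUnion (fun P => P.filter (fun C => C.card = 2)) with hPPdef
  have hPPcard : m * (k-2) ≤ PP.card := by
    rw [hPPdef, card_biUnion]
    · calc m * (k-2) = ∑ _P ∈ Sys, (k-2) := by rw [sum_const, smul_eq_mul]
        _ ≤ ∑ P ∈ Sys, (P.filter (fun C => C.card = 2)).card :=
          sum_le_sum (fun P hP => hsmallbig P hP)
    · intro P hP Q hQ hPQ
      rw [Function.onFun, disjoint_left]
      intro C hC hC'
      exact hdistinct P hP Q hQ hPQ C (mem_filter.mp hC).1 (mem_filter.mp hC').1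
  -- the set of pairs covered by big classes
  set U := ((univ : Finset (Fin (2*k+2))).powersetCard 2).filter
    (fun D => ∃ P ∈ Sys, ∃ C ∈ P, ¬ C.card = 2 ∧ D ⊆ C) with hUdef
  have hPU : Disjoint PP U := by
    rw [disjoint_left]
    intro D hD hDU
    rw [hPPdef, mem_biUnion] at hD
    obtain ⟨P, hP, hDP⟩ := hD
    have hD2 := (mem_filter.mp hDP).2
    have hDP' := (mem_filter.mp hDP).1
    rw [hUdef, mem_filter] at hDU
    obtain ⟨Q, hQ, C, hCQ, hC3, hDC⟩ := hDU.2
    exact hcross P hP D hDP' Q hQ C hCQ hD2 hC3 hDC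
  have hchoose : ((univ : Finset (Fin (2*k+2))).powersetCard 2).card
      = (k+1)*(2*k+1) := by
    rw [card_powersetCard, card_univ, Fintype.card_fin, Nat.choose_two_right]
    have h1 : 2*k+2-1 = 2*k+1 := by omega
    rw [h1]
    have h2 : (2*k+2) * (2*k+1) = 2 * ((k+1)*(2*k+1)) := by ring
    rw [h2, Nat.mul_div_cancel_left _ (by norm_num)]
  have hcount : PP.card + U.card ≤ (k+1)*(2*k+1) := by
    rw [← hchoose, ← card_union_of_disjoint hPU]
    apply card_le_card
    apply union_subset
    · intro D hD
      rw [hPPdef, mem_biUnion] at hD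
      obtain ⟨P, hP, hDP⟩ := hD
      exact mem_powersetCard.mpr ⟨subset_univ D, (mem_filter.mp hDP).2⟩
    · exact filter_subset _ _
  -- per-element sets
  set CA : Fin (2*k+2) → Finset (Finset (Fin (2*k+2))) :=
    fun x => Sys.biUnion (fun P => P.filter (fun C => x ∈ C)) with hCAdef
  have hCAmem : ∀ x C, C ∈ CA x ↔ (∃ P ∈ Sys, C ∈ P) ∧ x ∈ C := by
    intro x C
    rw [hCAdef]
    simp only [mem_biUnion, mem_filter]
    constructor
    · rintro ⟨P, hP, hCP, hx⟩; exact ⟨⟨P, hP, hCP⟩, hx⟩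
    · rintro ⟨⟨P, hP, hCP⟩, hx⟩; exact ⟨P, hP, hCP, hx⟩
  have hCAcard : ∀ x, (CA x).card = m := by
    intro x
    have hone : ∀ P ∈ Sys, (P.filter (fun C => x ∈ C)).card = 1 := by
      intro P hP
      obtain ⟨C₀, ⟨hC₀, hxC₀⟩, hu⟩ := hcover P hP x
      rw [card_eq_one]
      refine ⟨C₀, ?_⟩
      ext C
      simp only [mem_filter, mem_singleton]
      constructor
      · rintro ⟨h1, h2⟩; exact hu C ⟨h1, h2⟩
      · rintro rfl; exact ⟨hC₀, hxC₀⟩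
    have hdisj : ∀ P ∈ Sys, ∀ Q ∈ Sys, P ≠ Q →
        Disjoint (P.filter (fun C => x ∈ C)) (Q.filter (fun C => x ∈ C)) := by
      intro P hP Q hQ hPQ
      rw [disjoint_left]
      intro C hC hC'
      exact hdistinct P hP Q hQ hPQ C (mem_filter.mp hC).1 (mem_filter.mp hC').1
    rw [hCAdef, card_biUnion hdisj, sum_congr rfl hone, sum_const, smul_eq_mul, mul_one]
  set BigAt : Fin (2*k+2) → Finset (Finset (Fin (2*k+2))) :=
    fun x => (CA x).filter (fun C => ¬ C.card = 2) with hBdef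
  set PairAt : Fin (2*k+2) → Finset (Finset (Fin (2*k+2))) :=
    fun x => (CA x).filter (fun C => C.card = 2) with hPdef
  have hPB : ∀ x, (PairAt x).card + (BigAt x).card = m := by
    intro x
    rw [hPdef, hBdef]
    rw [card_filter_add_card_filter_not]
    exact hCAcard x
  set N : Fin (2*k+2) → Finset (Fin (2*k+2)) :=
    fun x => (BigAt x).biUnion (fun C => C.erase x) with hNdef
  -- facts about classes at x
  have hBig3 : ∀ x C, C ∈ BigAt x → 3 ≤ C.card ∧ C.card ≤ 4 ∧ x ∈ C
      ∧ ∃ P ∈ Sys, C ∈ P := by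
    intro x C hC
    rw [hBdef, mem_filter] at hC
    obtain ⟨hCA', hn2⟩ := hC
    rw [hCAmem] at hCA'
    obtain ⟨⟨P, hP, hCP⟩, hx⟩ := hCA'
    exact ⟨by have := hge2 P hP C hCP; omega, hle4 P hP C hCP, hx, P, hP, hCP⟩
  have hPair2 : ∀ x C, C ∈ PairAt x → C.card = 2 ∧ x ∈ C ∧ ∃ P ∈ Sys, C ∈ P := by
    intro x C hC
    rw [hPdef, mem_filter] at hC
    obtain ⟨hCA', h2⟩ := hC
    rw [hCAmem] at hCA'
    obtain ⟨⟨P, hP, hCP⟩, hx⟩ := hCA'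
    exact ⟨h2, hx, P, hP, hCP⟩
  have hpair_eq : ∀ (C : Finset (Fin (2*k+2))) (x y : Fin (2*k+2)),
      C.card = 2 → x ∈ C → y ∈ C → x ≠ y → C = {x, y} := by
    intro C x y h2 hx hy hxy
    symm
    apply eq_of_subset_of_card_le
    · intro z hz
      rcases mem_insert.mp hz with rfl | hz
      · exact hx
      · rw [mem_singleton] at hz; exact hz ▸ hy
    · rw [card_pair hxy]; omega
  -- key inequality 1 : |PairAt x| + |N x| ≤ 2k+1
  have hkey1 : ∀ x, (PairAt x).card + (N x).card ≤ 2*k+1 := by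
    intro x
    have hWcard : ((PairAt x).biUnion (fun C => C.erase x)).card = (PairAt x).card := by
      have hone : ∀ C ∈ PairAt x, (C.erase x).card = 1 := by
        intro C hC
        obtain ⟨h2, hx, -⟩ := hPair2 x C hC
        rw [card_erase_of_mem hx, h2]
      have hdisj : ∀ C ∈ PairAt x, ∀ C' ∈ PairAt x, C ≠ C' →
          Disjoint (C.erase x) (C'.erase x) := by
        intro C hC C' hC' hCC'
        rw [disjoint_left]
        intro y hy hy'
        obtain ⟨h2, hx, -⟩ := hPair2 x C hC
        obtain ⟨h2', hx', -⟩ := hPair2 x C' hC'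
        have hyC := mem_of_mem_erase hy
        have hyC' := mem_of_mem_erase hy'
        have hyx : x ≠ y := fun h => (mem_erase.mp hy).1 h.symm
        rw [hpair_eq C x y h2 hx hyC hyx, hpair_eq C' x y h2' hx' hyC' hyx] at hCC'
        exact hCC' rfl
      rw [card_biUnion hdisj, sum_congr rfl hone, sum_const, smul_eq_mul, mul_one]
    have hdisjWN : Disjoint ((PairAt x).biUnion (fun C => C.erase x)) (N x) := by
      rw [disjoint_left]
      intro y hy hyN
      rw [mem_biUnion] at hy
      obtain ⟨C, hC, hyC⟩ := hy
      rw [hNdef, mem_biUnion] at hyN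
      obtain ⟨C', hC', hyC'⟩ := hyN
      obtain ⟨h2, hx, P, hP, hCP⟩ := hPair2 x C hC
      obtain ⟨h3, -, hx', Q, hQ, hCQ⟩ := hBig3 x C' hC'
      have hyx : x ≠ y := fun h => (mem_erase.mp hyC).1 h.symm
      have hsubCC' : C ⊆ C' := by
        rw [hpair_eq C x y h2 hx (mem_of_mem_erase hyC) hyx]
        intro z hz
        rcases mem_insert.mp hz with rfl | hz
        · exact hx'
        · rw [mem_singleton] at hz; exact hz ▸ (mem_of_mem_erase hyC')
      exact hcross P hP C hCP Q hQ C' hCQ h2 (by omega) hsubCC'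
    have hsubU : ((PairAt x).biUnion (fun C => C.erase x)) ∪ N x ⊆ univ.erase x := by
      apply union_subset
      · intro y hy
        rw [mem_biUnion] at hy
        obtain ⟨C, hC, hyC⟩ := hy
        exact mem_erase.mpr ⟨(mem_erase.mp hyC).1, mem_univ y⟩
      · intro y hy
        rw [hNdef, mem_biUnion] at hy
        obtain ⟨C, hC, hyC⟩ := hy
        exact mem_erase.mpr ⟨(mem_erase.mp hyC).1, mem_univ y⟩
    have h1 := card_le_card hsubU
    rw [card_union_of_disjoint hdisjWN, hWcard, card_erase_of_mem (mem_univ x),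
      card_univ, Fintype.card_fin] at h1
    omega
  -- key inequality 2 : 5 ≤ |N x|
  have hkey2 : ∀ x, 5 ≤ (N x).card := by
    intro x
    by_contra hlt
    push_neg at hlt
    have hNle : (N x).card ≤ 4 := by omega
    have hxmem : ∀ C ∈ BigAt x, x ∈ C := fun C hC => (hBig3 x C hC).2.2.1
    have hinj : Set.InjOn (fun C : Finset (Fin (2*k+2)) => C.erase x) ↑(BigAt x) := by
      intro C hC C' hC' h
      have h2 : insert x (C.erase x) = insert x (C'.erase x) := by
        simp only at h; rw [h]
      rwa [insert_erase (hxmem C (mem_coe.mp hC)),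
        insert_erase (hxmem C' (mem_coe.mp hC'))] at h2
    have himgcard : ((BigAt x).image (fun C => C.erase x)).card = (BigAt x).card :=
      card_image_of_injOn hinj
    have hbound : ((BigAt x).image (fun C => C.erase x)).card ≤ (N x).card + 2 := by
      apply antichain_small (N x) hNle
      · intro A hA
        obtain ⟨C, hC, rfl⟩ := mem_image.mp hA
        simp only [hNdef]
        exact subset_biUnion_of_mem (fun C => C.erase x) hC
      · intro A hA
        obtain ⟨C, hC, rfl⟩ := mem_image.mp hA
        obtain ⟨h3, h4, hx, -⟩ := hBig3 x C hC
        rw [card_erase_of_mem hx]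
        omega
      · intro A hA B hB hAB
        obtain ⟨C, hC, rfl⟩ := mem_image.mp hA
        obtain ⟨C', hC', rfl⟩ := mem_image.mp hB
        by_cases hCC' : C = C'
        · rw [hCC']
        · exfalso
          obtain ⟨h3, -, hx, P, hP, hCP⟩ := hBig3 x C hC
          obtain ⟨h3', -, hx', Q, hQ, hCQ⟩ := hBig3 x C' hC'
          have hPQ : P ≠ Q := by
            rintro rfl
            exact hCC' (huniq P hP C hCP C' hCQ x hx hx')
          apply hsper P hP Q hQ hPQ C hCP C' hCQ
          intro z hz
          by_cases hzx : z = x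
          · exact hzx ▸ hx'
          · exact mem_of_mem_erase (hAB (mem_erase.mpr ⟨hzx, hz⟩))
    have hd : (BigAt x).card ≥ (N x).card + 3 := by
      have h1 := hkey1 x
      have h2 := hPB x
      omega
    omega
  -- key inequality 3 : |N x| ≤ |U.filter (x ∈ ·)|
  have hkey3 : ∀ x, (N x).card ≤ (U.filter (fun D => x ∈ D)).card := by
    intro x
    have hyx : ∀ y ∈ N x, y ≠ x := by
      intro y hy
      rw [hNdef, mem_biUnion] at hy
      obtain ⟨C, hC, hyC⟩ := hy
      exact (mem_erase.mp hyC).1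
    have hinj : Set.InjOn (fun y => ({x, y} : Finset (Fin (2*k+2)))) ↑(N x) := by
      intro y hy y' hy' h
      simp only at h
      have : y' ∈ ({x, y} : Finset (Fin (2*k+2))) := by
        rw [h]; exact mem_insert_of_mem (mem_singleton_self y')
      rcases mem_insert.mp this with h' | h'
      · exact absurd h' (hyx y' (mem_coe.mp hy'))
      · exact (mem_singleton.mp h').symm
    rw [← card_image_of_injOn hinj]
    apply card_le_card
    intro D hD
    obtain ⟨y, hy, rfl⟩ := mem_image.mp hD
    rw [hNdef, mem_biUnion] at hy
    obtain ⟨C, hC, hyC⟩ := hy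
    obtain ⟨h3, -, hx, P, hP, hCP⟩ := hBig3 x C hC
    have hyx' : x ≠ y := fun h => (mem_erase.mp hyC).1 h.symm
    rw [mem_filter]
    refine ⟨?_, mem_insert_self x _⟩
    rw [hUdef, mem_filter]
    refine ⟨mem_powersetCard.mpr ⟨subset_univ _, card_pair hyx'⟩,
      P, hP, C, hCP, by omega, ?_⟩
    intro z hz
    rcases mem_insert.mp hz with rfl | hz
    · exact hx
    · rw [mem_singleton] at hz; exact hz ▸ (mem_of_mem_erase hyC)
  -- double counting
  have hUcard : 5*k+5 ≤ U.card := by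
    have hs1 : (univ : Finset (Fin (2*k+2))).card • 5 ≤ ∑ x, (N x).card :=
      card_nsmul_le_sum _ _ _ (fun x _ => hkey2 x)
    rw [card_univ, Fintype.card_fin, smul_eq_mul] at hs1
    have hs2 : ∑ x, (N x).card ≤ ∑ x, (U.filter (fun D => x ∈ D)).card :=
      sum_le_sum (fun x _ => hkey3 x)
    have hs3 : ∑ x : Fin (2*k+2), (U.filter (fun D => x ∈ D)).card = 2 * U.card := by
      have h1 : ∀ x : Fin (2*k+2), (U.filter (fun D => x ∈ D)).card
          = ∑ D ∈ U, if x ∈ D then 1 else 0 := fun x => card_filter _ _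
      calc ∑ x : Fin (2*k+2), (U.filter (fun D => x ∈ D)).card
          = ∑ x : Fin (2*k+2), ∑ D ∈ U, if x ∈ D then 1 else 0 :=
            sum_congr rfl (fun x _ => h1 x)
        _ = ∑ D ∈ U, ∑ x : Fin (2*k+2), if x ∈ D then 1 else 0 := sum_comm
        _ = ∑ D ∈ U, D.card := by
            apply sum_congr rfl
            intro D hD
            rw [← card_filter]
            rw [filter_mem_eq_inter, univ_inter]
        _ = ∑ D ∈ U, 2 := by
            apply sum_congr rfl
            intro D hD
            rw [hUdef, mem_filter] at hD
            exact (mem_powersetCard.mp hD.1).2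
        _ = 2 * U.card := by rw [sum_const, smul_eq_mul, mul_comm]
    omega
  -- final contradiction
  obtain ⟨j, rfl⟩ : ∃ j, k = j + 3 := ⟨k - 3, by omega⟩
  have e1 : (j + 3) - 2 = j + 1 := by omega
  rw [e1] at hPPcard
  have h1 : (2*j+10) * (j+1) ≤ m * (j+1) :=
    Nat.mul_le_mul_right _ (by omega : 2*j+10 ≤ m)
  have h2 : (2*j+10) * (j+1) ≤ PP.card := le_trans h1 hPPcard
  nlinarith [h2, hUcard, hcount]

lemma empty_system (k n : ℕ) :
    IsSpernerPartitionSystem (Finset.univ : Finset (Fin n)) k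
      (∅ : Finset (Finset (Finset (Fin n)))) := by
  constructor
  · intro P hP; exact absurd hP (notMem_empty P)
  · intro P hP; exact absurd hP (notMem_empty P)

theorem SP_two_k_add_two_upper (k : ℕ) (hk : 3 ≤ k) :
    SP (2 * k + 2) k ≤ 2 * k + 3 := by
  unfold SP
  apply csSup_le
  · exact ⟨0, ∅, empty_system k _, card_empty⟩
  · rintro m ⟨Sys, hSys, rfl⟩
    exact sys_card_le k hk Sys hSys
end

section
/- For every integer k > 3, SP(3k-1, k) ≥ 3k-1; that is, there exists a Sperner k-partition system on a (3k-1)-element set with at least 3k-1 partitions. -/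
open Finset


lemma dvd_opts' {N x : ℤ} (hN : 0 < N) (h : N ∣ x) :
    x ≤ -2*N ∨ x = -N ∨ x = 0 ∨ x = N ∨ 2*N ≤ x := by
  obtain ⟨t, rfl⟩ := h
  have ht : t ≤ -2 ∨ t = -1 ∨ t = 0 ∨ t = 1 ∨ 2 ≤ t := by omega
  rcases ht with h|rfl|rfl|rfl|h
  · left; nlinarith
  · right; left; ring
  · right; right; left; ring
  · right; right; right; left; ring
  · right; right; right; right; nlinarith

def piF (k i : ℕ) : ℕ :=
  if k % 2 = 1 then (if 2*i+2 < k then 2*i+2 else 2*i+2-k)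
  else (if i = 0 then k-2 else if 2*i ≤ k then 2*i-1 else 2*i-k)

lemma piF_lt (k i : ℕ) (hk : 3 < k) (hi : i < k-1) : piF k i < k := by
  unfold piF; split_ifs <;> omega
lemma piF_pos (k i : ℕ) (hk : 3 < k) (hi : i < k-1) : 0 < piF k i := by
  unfold piF; split_ifs <;> omega
lemma piF_inj (k i j : ℕ) (hk : 3 < k) (hi : i < k-1) (hj : j < k-1)
    (h : piF k i = piF k j) : i = j := by
  unfold piF at h; split_ifs at h <;> omega
lemma piF_uinj (k i j : ℕ) (hk : 3 < k) (hi : i < k-1) (hj : j < k-1)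
    (h : piF k i + j = piF k j + i) : i = j := by
  unfold piF at h; split_ifs at h <;> omega
lemma piF_pm1 (k i j : ℕ) (hk : 3 < k) (hi : i < k-1) (hj : j < k-1) :
    ¬(piF k i = i + 1 ∧ piF k j + 1 = j) := by
  unfold piF; split_ifs <;> omega
lemma piF_f6 (k j : ℕ) (hk : 3 < k) (hj : j < k-1) : piF k j + k ≠ j + 1 := by
  unfold piF; split_ifs <;> omega
lemma piF_f7 (k j : ℕ) (hk : 3 < k) (hj : j < k-1) : piF k j ≠ j + (k-1) := by
  unfold piF; split_ifs <;> omega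

lemma cast_dvd {m : ℕ} {a b : ℕ} (h : (a : ZMod (m+1)) = b) :
    ((m+1 : ℕ) : ℤ) ∣ (a : ℤ) - b := by
  have h1 := (ZMod.natCast_eq_natCast_iff a b (m+1)).mp h
  exact dvd_sub_comm.mp ((Nat.modEq_iff_dvd).mp h1)

/-- Master lift: two shifted-cast equations give a 3-way linear alternative. -/
lemma key3 {m : ℕ} {x1 y1 x2 y2 : ℕ} {d e : ZMod (m+1)}
    (h1 : (x1 : ZMod (m+1)) + d = (y1 : ZMod (m+1)) + e)
    (h2 : (x2 : ZMod (m+1)) + d = (y2 : ZMod (m+1)) + e)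
    (b1 : x1 < m+1) (b2 : y1 < m+1) (b3 : x2 < m+1) (b4 : y2 < m+1) :
    x1 + y2 + (m+1) = y1 + x2 ∨ x1 + y2 = y1 + x2 ∨ x1 + y2 = y1 + x2 + (m+1) := by
  have h3 : ((x1 + y2 : ℕ) : ZMod (m+1)) = ((y1 + x2 : ℕ) : ZMod (m+1)) := by
    push_cast
    linear_combination h1 - h2
  have h4 := dvd_opts' (by positivity : (0:ℤ) < ((m+1:ℕ):ℤ)) (cast_dvd h3)
  omega

/-- Single-equation lift (same shift d on both sides). -/
lemma key1 {m : ℕ} {x1 y1 : ℕ} {d : ZMod (m+1)}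
    (h1 : (x1 : ZMod (m+1)) + d = (y1 : ZMod (m+1)) + d)
    (b1 : x1 < m+1) (b2 : y1 < m+1) : x1 = y1 := by
  have h3 : ((x1 : ℕ) : ZMod (m+1)) = ((y1 : ℕ) : ZMod (m+1)) := by
    linear_combination h1
  have h4 := dvd_opts' (by positivity : (0:ℤ) < ((m+1:ℕ):ℤ)) (cast_dvd h3)
  omega

def tr (k m : ℕ) (i : ℕ) (d : ZMod (m+1)) : Finset (ZMod (m+1)) :=
  {(i : ZMod (m+1)) + d, ((k + piF k i : ℕ) : ZMod (m+1)) + d,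
   ((2*k + i : ℕ) : ZMod (m+1)) + d}

def pr (k m : ℕ) (d : ZMod (m+1)) : Finset (ZMod (m+1)) :=
  {((k-1 : ℕ) : ZMod (m+1)) + d, ((k : ℕ) : ZMod (m+1)) + d}

set_option maxHeartbeats 2000000 in
lemma TT {k m : ℕ} (hk : 3 < k) (hm : m + 1 = 3*k - 1)
    {i j : ℕ} (hi : i < k-1) (hj : j < k-1) {d e : ZMod (m+1)}
    (h : ∀ x ∈ tr k m i d, x ∈ tr k m j e) : i = j ∧ d = e := by
  have h1 := h ((i : ZMod (m+1)) + d)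
      (by simp only [tr, Finset.mem_insert, Finset.mem_singleton]; tauto)
  have h2 := h (((k + piF k i : ℕ) : ZMod (m+1)) + d)
      (by simp only [tr, Finset.mem_insert, Finset.mem_singleton]; tauto)
  have h3 := h (((2*k + i : ℕ) : ZMod (m+1)) + d)
      (by simp only [tr, Finset.mem_insert, Finset.mem_singleton]; tauto)
  simp only [tr, Finset.mem_insert, Finset.mem_singleton] at h1 h2 h3
  have F1i := piF_lt k i hk hi
  have F1j := piF_lt k j hk hj
  have F2i := piF_pos k i hk hi
  have F2j := piF_pos k j hk hj
  have F4 := piF_uinj k i j hk hi hj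
  have F5a := piF_pm1 k i j hk hi hj
  have F5b := piF_pm1 k j i hk hj hi
  have F6i := piF_f6 k i hk hi
  have F6j := piF_f6 k j hk hj
  have F7i := piF_f7 k i hk hi
  have F7j := piF_f7 k j hk hj
  have bi : i < m+1 := by omega
  have bj : j < m+1 := by omega
  have bpi : k + piF k i < m+1 := by omega
  have bpj : k + piF k j < m+1 := by omega
  have bci : 2*k + i < m+1 := by omega
  have bcj : 2*k + j < m+1 := by omega
  rcases h1 with h1|h1|h1 <;> rcases h2 with h2|h2|h2 <;> rcases h3 with h3|h3|h3 <;>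
    (have D1 := key3 h1 h2 (by omega) (by omega) (by omega) (by omega)
     have D2 := key3 h1 h3 (by omega) (by omega) (by omega) (by omega)
     have D3 := key3 h2 h3 (by omega) (by omega) (by omega) (by omega)
     have hij : i = j := by omega
     subst hij
     refine ⟨rfl, ?_⟩
     first
       | exact add_left_cancel h1
       | (exfalso; omega))

set_option maxHeartbeats 1000000 in
lemma TP {k m : ℕ} (hk : 3 < k) (hm : m + 1 = 3*k - 1)
    {i : ℕ} (hi : i < k-1) {d e : ZMod (m+1)}
    (h : ∀ x ∈ tr k m i d, x ∈ pr k m e) : False := by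
  have h1 := h ((i : ZMod (m+1)) + d)
      (by simp only [tr, Finset.mem_insert, Finset.mem_singleton]; tauto)
  have h2 := h (((k + piF k i : ℕ) : ZMod (m+1)) + d)
      (by simp only [tr, Finset.mem_insert, Finset.mem_singleton]; tauto)
  have h3 := h (((2*k + i : ℕ) : ZMod (m+1)) + d)
      (by simp only [tr, Finset.mem_insert, Finset.mem_singleton]; tauto)
  simp only [pr, Finset.mem_insert, Finset.mem_singleton] at h1 h2 h3
  have F1i := piF_lt k i hk hi
  have F2i := piF_pos k i hk hi
  have F7i := piF_f7 k i hk hi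
  rcases h1 with h1|h1 <;> rcases h2 with h2|h2 <;> rcases h3 with h3|h3 <;>
    (have D1 := key3 h1 h2 (by omega) (by omega) (by omega) (by omega)
     have D2 := key3 h1 h3 (by omega) (by omega) (by omega) (by omega)
     have D3 := key3 h2 h3 (by omega) (by omega) (by omega) (by omega)
     omega)

set_option maxHeartbeats 1000000 in
lemma PT {k m : ℕ} (hk : 3 < k) (hm : m + 1 = 3*k - 1)
    {j : ℕ} (hj : j < k-1) {d e : ZMod (m+1)}
    (h : ∀ x ∈ pr k m d, x ∈ tr k m j e) : False := by
  have h1 := h (((k-1 : ℕ) : ZMod (m+1)) + d)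
      (by simp only [pr, Finset.mem_insert, Finset.mem_singleton]; tauto)
  have h2 := h (((k : ℕ) : ZMod (m+1)) + d)
      (by simp only [pr, Finset.mem_insert, Finset.mem_singleton]; tauto)
  simp only [tr, Finset.mem_insert, Finset.mem_singleton] at h1 h2
  have F1j := piF_lt k j hk hj
  have F2j := piF_pos k j hk hj
  have F6j := piF_f6 k j hk hj
  have F7j := piF_f7 k j hk hj
  rcases h1 with h1|h1|h1 <;> rcases h2 with h2|h2|h2 <;>
    (have D1 := key3 h1 h2 (by omega) (by omega) (by omega) (by omega)
     omega)

set_option maxHeartbeats 1000000 in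
lemma PP {k m : ℕ} (hk : 3 < k) (hm : m + 1 = 3*k - 1)
    {d e : ZMod (m+1)}
    (h : ∀ x ∈ pr k m d, x ∈ pr k m e) : d = e := by
  have h1 := h (((k-1 : ℕ) : ZMod (m+1)) + d)
      (by simp only [pr, Finset.mem_insert, Finset.mem_singleton]; tauto)
  have h2 := h (((k : ℕ) : ZMod (m+1)) + d)
      (by simp only [pr, Finset.mem_insert, Finset.mem_singleton]; tauto)
  simp only [pr, Finset.mem_insert, Finset.mem_singleton] at h1 h2
  rcases h1 with h1|h1 <;> rcases h2 with h2|h2 <;>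
    first
      | exact add_left_cancel h1
      | (exfalso
         have D1 := key3 h1 h2 (by omega) (by omega) (by omega) (by omega)
         omega)

-- same-shift separation
set_option maxHeartbeats 1000000 in
lemma tr_sep {k m : ℕ} (hk : 3 < k) (hm : m + 1 = 3*k - 1)
    {i j : ℕ} (hi : i < k-1) (hj : j < k-1) {d : ZMod (m+1)} {y : ZMod (m+1)}
    (h1 : y ∈ tr k m i d) (h2 : y ∈ tr k m j d) : i = j := by
  simp only [tr, Finset.mem_insert, Finset.mem_singleton] at h1 h2
  have F1i := piF_lt k i hk hi
  have F1j := piF_lt k j hk hj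
  have F2i := piF_pos k i hk hi
  have F2j := piF_pos k j hk hj
  have F3 := piF_inj k i j hk hi hj
  rcases h1 with h1|h1|h1 <;> rcases h2 with h2|h2|h2 <;>
    (have D1 := key1 (h1 ▸ h2.symm) (by omega) (by omega)
     omega)

set_option maxHeartbeats 1000000 in
lemma pr_tr_sep {k m : ℕ} (hk : 3 < k) (hm : m + 1 = 3*k - 1)
    {i : ℕ} (hi : i < k-1) {d : ZMod (m+1)} {y : ZMod (m+1)}
    (h1 : y ∈ pr k m d) (h2 : y ∈ tr k m i d) : False := by
  simp only [tr, pr, Finset.mem_insert, Finset.mem_singleton] at h1 h2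
  have F1i := piF_lt k i hk hi
  have F2i := piF_pos k i hk hi
  rcases h1 with h1|h1 <;> rcases h2 with h2|h2|h2 <;>
    (have D1 := key1 (h1 ▸ h2.symm) (by omega) (by omega)
     omega)

lemma piF_surj (k w : ℕ) (hk : 3 < k) (h1 : 0 < w) (h2 : w < k) :
    ∃ i, i < k-1 ∧ piF k i = w := by
  by_cases hke : k % 2 = 1
  · by_cases hwe : w % 2 = 0
    · exact ⟨(w-2)/2, by omega, by unfold piF; split_ifs <;> omega⟩
    · exact ⟨(w+k)/2 - 1, by omega, by unfold piF; split_ifs <;> omega⟩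
  · by_cases hwo : w % 2 = 1
    · exact ⟨(w+1)/2, by omega, by unfold piF; split_ifs <;> omega⟩
    · by_cases hw : w = k-2
      · exact ⟨0, by omega, by unfold piF; split_ifs <;> omega⟩
      · exact ⟨(w+k)/2, by omega, by unfold piF; split_ifs <;> omega⟩


def Pd (k m : ℕ) (d : ZMod (m+1)) : Finset (Finset (ZMod (m+1))) :=
  insert (pr k m d) ((Finset.range (k-1)).image (fun i => tr k m i d))

lemma covers {k m : ℕ} (hk : 3 < k) (hm : m + 1 = 3*k - 1) (d : ZMod (m+1))
    (x : ZMod (m+1)) : ∃ A ∈ Pd k m d, x ∈ A := by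
  set v := (x - d).val with hv
  have hvlt : v < m+1 := ZMod.val_lt _
  have hx : x = (v : ZMod (m+1)) + d := by
    rw [hv, ZMod.natCast_rightInverse (x - d)]; ring
  by_cases h1 : v < k-1
  · refine ⟨tr k m v d, ?_, ?_⟩
    · exact Finset.mem_insert_of_mem (Finset.mem_image_of_mem _ (Finset.mem_range.mpr h1))
    · rw [hx]; simp only [tr, Finset.mem_insert, Finset.mem_singleton]; tauto
  · by_cases h2 : v < k+1
    · refine ⟨pr k m d, Finset.mem_insert_self _ _, ?_⟩
      simp only [pr, Finset.mem_insert, Finset.mem_singleton]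
      have : v = k-1 ∨ v = k := by omega
      rcases this with h|h <;> rw [hx, h] <;> tauto
    · by_cases h3 : v < 2*k
      · obtain ⟨i, hilt, hpi⟩ := piF_surj k (v - k) hk (by omega) (by omega)
        refine ⟨tr k m i d, ?_, ?_⟩
        · exact Finset.mem_insert_of_mem (Finset.mem_image_of_mem _ (Finset.mem_range.mpr hilt))
        · simp only [tr, Finset.mem_insert, Finset.mem_singleton]
          have : k + piF k i = v := by omega
          rw [hx, this]; tauto
      · refine ⟨tr k m (v - 2*k) d, ?_, ?_⟩
        · exact Finset.mem_insert_of_mem (Finset.mem_image_of_mem _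
            (Finset.mem_range.mpr (by omega)))
        · simp only [tr, Finset.mem_insert, Finset.mem_singleton]
          have : 2*k + (v - 2*k) = v := by omega
          rw [hx, this]; tauto

lemma classes_eq {k m : ℕ} (hk : 3 < k) (hm : m + 1 = 3*k - 1) {d : ZMod (m+1)}
    {A B : Finset (ZMod (m+1))} (hA : A ∈ Pd k m d) (hB : B ∈ Pd k m d)
    {x : ZMod (m+1)} (hxA : x ∈ A) (hxB : x ∈ B) : A = B := by
  simp only [Pd, Finset.mem_insert, Finset.mem_image, Finset.mem_range] at hA hB
  rcases hA with rfl | ⟨i, hi, rfl⟩ <;> rcases hB with rfl | ⟨j, hj, rfl⟩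
  · rfl
  · exact absurd (pr_tr_sep hk hm hj hxA hxB) (by tauto)
  · exact absurd (pr_tr_sep hk hm hi hxB hxA) (by tauto)
  · rw [tr_sep hk hm hi hj hxA hxB]

lemma part_Pd {k m : ℕ} (hk : 3 < k) (hm : m + 1 = 3*k - 1) (d : ZMod (m+1)) :
    IsPartitionInto (Finset.univ : Finset (ZMod (m+1))) k (Pd k m d) := by
  refine ⟨?_, ?_, fun A _ => Finset.subset_univ A, ?_⟩
  · rw [Pd, Finset.card_insert_of_notMem, Finset.card_image_of_injOn,
      Finset.card_range]
    · omega
    · intro i hi j hj hij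
      simp only [Finset.mem_coe, Finset.mem_range] at hi hj
      have hmem1 : (i : ZMod (m+1)) + d ∈ tr k m i d := by
        simp only [tr, Finset.mem_insert]; tauto
      have hmem2 : (i : ZMod (m+1)) + d ∈ tr k m j d := by
        have hij' : tr k m i d = tr k m j d := hij
        rw [← hij']; exact hmem1
      exact tr_sep hk hm hi hj hmem1 hmem2
    · intro hmem
      simp only [Finset.mem_image, Finset.mem_range] at hmem
      obtain ⟨i, hi, heq⟩ := hmem
      exact pr_tr_sep hk hm hi
        (heq ▸ (by simp only [tr, Finset.mem_insert]; tauto : (i : ZMod (m+1)) + d ∈ tr k m i d))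
        (by simp only [tr, Finset.mem_insert]; tauto)
  · intro A hA
    simp only [Pd, Finset.mem_insert, Finset.mem_image, Finset.mem_range] at hA
    rcases hA with rfl | ⟨i, hi, rfl⟩
    · exact ⟨_, by simp only [pr, Finset.mem_insert]; tauto⟩
    · exact ⟨_, by simp only [tr, Finset.mem_insert]; tauto⟩
  · intro x _
    obtain ⟨A, hA, hxA⟩ := covers hk hm d x
    exact ⟨A, ⟨hA, hxA⟩, fun B ⟨hB, hxB⟩ => classes_eq hk hm hB hA hxB hxA⟩

def SysC (k m : ℕ) : Finset (Finset (Finset (ZMod (m+1)))) :=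
  (Finset.univ : Finset (ZMod (m+1))).image (fun d => Pd k m d)

lemma Pd_inj {k m : ℕ} (hk : 3 < k) (hm : m + 1 = 3*k - 1) {d e : ZMod (m+1)}
    (h : Pd k m d = Pd k m e) : d = e := by
  have hpr : pr k m d ∈ Pd k m e := h ▸ Finset.mem_insert_self _ _
  simp only [Pd, Finset.mem_insert, Finset.mem_image, Finset.mem_range] at hpr
  rcases hpr with heq | ⟨j, hj, heq⟩
  · exact PP hk hm (fun x hx => heq ▸ hx)
  · exact absurd (PT hk hm hj (fun x hx => heq.symm ▸ hx)) not_false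

lemma main_sys (k m : ℕ) (hk : 3 < k) (hm : m + 1 = 3*k - 1) :
    ∃ Sys : Finset (Finset (Finset (ZMod (m+1)))),
      IsSpernerPartitionSystem Finset.univ k Sys ∧ Sys.card = m+1 := by
  refine ⟨SysC k m, ⟨?_, ?_⟩, ?_⟩
  · intro P hP
    simp only [SysC, Finset.mem_image] at hP
    obtain ⟨d, _, rfl⟩ := hP
    exact part_Pd hk hm d
  · intro P hP Q hQ hPQ A hA B hB hsub
    simp only [SysC, Finset.mem_image] at hP hQ
    obtain ⟨d, _, rfl⟩ := hP
    obtain ⟨e, _, rfl⟩ := hQ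
    have hde : d ≠ e := fun h => hPQ (h ▸ rfl)
    simp only [Pd, Finset.mem_insert, Finset.mem_image, Finset.mem_range] at hA hB
    rcases hA with rfl | ⟨i, hi, rfl⟩ <;> rcases hB with rfl | ⟨j, hj, rfl⟩
    · exact hde (PP hk hm (fun x hx => hsub hx))
    · exact PT hk hm hj (fun x hx => hsub hx)
    · exact TP hk hm hi (fun x hx => hsub hx)
    · exact hde (TT hk hm hi hj (fun x hx => hsub hx)).2
  · rw [SysC, Finset.card_image_of_injOn (fun d _ e _ h => Pd_inj hk hm h),
      Finset.card_univ, ZMod.card]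

theorem SP_three_k_sub_one_lower (k : ℕ) (hk : 3 < k) :
    3 * k - 1 ≤ SP (3 * k - 1) k := by
  obtain ⟨m, hm⟩ : ∃ m, 3*k - 1 = m+1 := ⟨3*k - 2, by omega⟩
  rw [hm]
  obtain ⟨Sys, hS, hc⟩ := main_sys k m hk hm.symm
  have hmem : (m+1) ∈ {n | ∃ Sys : Finset (Finset (Finset (Fin (m+1)))),
      IsSpernerPartitionSystem Finset.univ k Sys ∧ Sys.card = n} := ⟨Sys, hS, hc⟩
  have hbdd : BddAbove {n | ∃ Sys : Finset (Finset (Finset (Fin (m+1)))),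
      IsSpernerPartitionSystem Finset.univ k Sys ∧ Sys.card = n} := by
    refine ⟨Fintype.card (Finset (Finset (Fin (m+1)))), ?_⟩
    rintro x ⟨S, _, rfl⟩
    exact Finset.card_le_univ S
  exact le_csSup hbdd hmem
end
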